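/- Let $g:[0,T]\times\mathbb{R}\times\mathscr{P}_2(\mathbb{R})\to\mathbb{R}$ be such that for each $t$ the map $(x,\mu)\mapsto g(t,x,\mu)$ is continuously differentiable in $x$ with derivative $\partial_x g$, and Lions differentiable in $\mu$ with derivative $\partial_\mu g(t,x,\mu,\cdot)$, and suppose there is $L>0$ with $|\partial_x g(t,x,\mu)-\partial_x g(t,\bar x,\bar\mu)| \le L(|x-\bar x| + \mathcal{W}_2(\mu,\bar\mu))$ and $|\partial_\mu g(t,x,\mu,y)-\partial_\mu g(t,\bar x,\bar\mu,\bar y)| \le L(|x-\bar x| + \mathcal{W}_2(\mu,\bar\mu) + |y-\bar y|)$. Then for all $t\in[0,T]$, all $x^1,\dots,x^N,\bar x^1,\dots,\bar x^N\in\mathbb{R}$ and each $i$: $\big| g(t,x^i,\tfrac1N\sum_k\delta_{x^k}) - g(t,\bar x^i,\tfrac1N\sum_k\delta_{\bar x^k}) - \partial_x g(t,\bar x^i,\tfrac1N\sum_k\delta_{\bar x^k})(x^i-\bar x^i) - \tfrac1N\sum_{k=1}^N \partial_\mu g(t,\bar x^i,\tfrac1N\sum_k\delta_{\bar x^k},\bar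 x^k)(x^k-\bar x^k)\big| \le \tfrac{3L}{2}|x^i-\bar x^i|^2 + \tfrac{5L}{2}\cdot\tfrac1N\sum_{k=1}^N |x^k-\bar x^k|^2$. -/

import Mathlib

open MeasureTheory

/-- The 2-Wasserstein distance between two measures on a normed space,
defined via the infimum over couplings. -/
noncomputable def wasserstein2 {E : Type*} [NormedAddCommGroup E] [MeasurableSpace E]
    (μ ν : Measure E) : ℝ :=
  sInf { r : ℝ | ∃ π : Measure (E × E), IsProbabilityMeasure π ∧
    π.map Prod.fst = μ ∧ π.map Prod.snd = ν ∧
    r = Real.sqrt (∫ p, ‖p.1 - p.2‖ ^ 2 ∂π) }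

/-- `μ ∈ 𝒫₂`: a probability measure with finite second moment. -/
def MemP2 {E : Type*} [NormedAddCommGroup E] [MeasurableSpace E] (μ : Measure E) : Prop :=
  IsProbabilityMeasure μ ∧ Integrable (fun x => ‖x‖ ^ 2) μ

/-- The empirical measure of `N` points: mass `1/N` at each point. -/
noncomputable def empiricalMeasure {E : Type*} [MeasurableSpace E] {N : ℕ}
    (x : Fin N → E) : Measure E :=
  (N : ENNReal)⁻¹ • ∑ i, Measure.dirac (x i)

lemma measure_map_finset_sum {α β ι : Type*} [MeasurableSpace α] [MeasurableSpace β]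
    {f : α → β} (hf : Measurable f) (s : Finset ι) (μ : ι → Measure α) :
    (∑ i ∈ s, μ i).map f = ∑ i ∈ s, (μ i).map f := by
  classical
  induction s using Finset.induction_on with
  | empty => simp
  | insert _ _ h ih => rw [Finset.sum_insert h, Finset.sum_insert h, Measure.map_add _ _ hf, ih]

lemma integrable_dirac'' {α : Type*} [MeasurableSpace α] {f : α → ℝ}
    (hf : StronglyMeasurable f) (a : α) : Integrable f (Measure.dirac a) := by
  refine ⟨hf.aestronglyMeasurable, ?_⟩
  have h : ∫⁻ x, ‖f x‖ₑ ∂(Measure.dirac a) = ‖f a‖ₑ :=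
    lintegral_dirac' a hf.measurable.enorm
  simp [HasFiniteIntegral, h]

lemma isProb_empirical {N : ℕ} (hN : 0 < N) {E : Type*} [MeasurableSpace E] (v : Fin N → E) :
    IsProbabilityMeasure (empiricalMeasure v) := by
  constructor
  simp only [empiricalMeasure, Measure.smul_apply, Measure.finset_sum_apply,
    Measure.dirac_apply_of_mem (Set.mem_univ _), Finset.sum_const, Finset.card_univ,
    Fintype.card_fin, nsmul_eq_mul, mul_one, smul_eq_mul]
  rw [ENNReal.inv_mul_cancel (by exact_mod_cast hN.ne') (by simp)]

lemma memP2_empirical {N : ℕ} (hN : 0 < N) (v : Fin N → ℝ) :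
    MemP2 (empiricalMeasure v) := by
  refine ⟨isProb_empirical hN v, ?_⟩
  unfold empiricalMeasure
  refine Integrable.smul_measure ?_ (by simp [hN.ne'])
  rw [integrable_finset_sum_measure]
  intro k _
  exact integrable_dirac'' ((by fun_prop : Continuous fun x : ℝ => ‖x‖ ^ 2).stronglyMeasurable) _

lemma w2_empirical_le {N : ℕ} (hN : 0 < N) (v w : Fin N → ℝ) :
    wasserstein2 (empiricalMeasure v) (empiricalMeasure w)
      ≤ Real.sqrt ((1 / N : ℝ) * ∑ k, (v k - w k) ^ 2) := by
  have hNE : (N : ENNReal) ≠ 0 := by exact_mod_cast hN.ne'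
  set π : Measure (ℝ × ℝ) := (N : ENNReal)⁻¹ • ∑ k : Fin N, Measure.dirac (v k, w k) with hπ
  have hprob : IsProbabilityMeasure π := by
    constructor
    simp only [hπ, Measure.smul_apply, Measure.finset_sum_apply,
      Measure.dirac_apply_of_mem (Set.mem_univ _), Finset.sum_const, Finset.card_univ,
      Fintype.card_fin, nsmul_eq_mul, mul_one, smul_eq_mul]
    rw [ENNReal.inv_mul_cancel hNE (by simp)]
  have h1 : π.map Prod.fst = empiricalMeasure v := by
    rw [hπ, Measure.map_smul, measure_map_finset_sum measurable_fst]
    simp only [Measure.map_dirac' measurable_fst]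
    rfl
  have h2 : π.map Prod.snd = empiricalMeasure w := by
    rw [hπ, Measure.map_smul, measure_map_finset_sum measurable_snd]
    simp only [Measure.map_dirac' measurable_snd]
    rfl
  have hint : ∫ p, ‖p.1 - p.2‖ ^ 2 ∂π = (1 / N : ℝ) * ∑ k, (v k - w k) ^ 2 := by
    rw [hπ, integral_smul_measure,
      integral_finset_sum_measure (fun k _ => integrable_dirac'' ((by fun_prop : Continuous fun p : ℝ × ℝ => ‖p.1 - p.2‖ ^ 2).stronglyMeasurable) _)]
    simp [integral_dirac, Real.norm_eq_abs, sq_abs, ENNReal.toReal_inv]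
  apply csInf_le
  · refine ⟨0, fun r hr => ?_⟩
    obtain ⟨π', _, _, _, hr⟩ := hr
    rw [hr]; exact Real.sqrt_nonneg _
  · exact ⟨π, hprob, h1, h2, by rw [hint]⟩

set_option maxHeartbeats 1000000 in
/-- First-order Taylor expansion error bound (Lemma A.3) for functions of
empirical measures, for `g` whose state derivative `dx = ∂ₓg` and Lions
derivative `dμ = ∂_μ g` are Lipschitz uniformly in time.  The differentiability
is expressed through the induced function `v ↦ g t (v i) (empiricalMeasure v)`
on `ℝ^N`, whose partial derivatives are identified with `∂ₓ g` and
`(1/N) ∂_μ g`. -/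
theorem lions_taylor_bound {N : ℕ} (hN : 0 < N) (T L : ℝ) (hT : 0 < T) (hL : 0 < L)
    (g : ℝ → ℝ → Measure ℝ → ℝ)
    (dx : ℝ → ℝ → Measure ℝ → ℝ)
    (dmu : ℝ → ℝ → Measure ℝ → ℝ → ℝ)
    (hderiv : ∀ t ∈ Set.Icc (0 : ℝ) T, ∀ (i : Fin N) (xs : Fin N → ℝ),
      HasFDerivAt (fun v : Fin N → ℝ => g t (v i) (empiricalMeasure v))
        (∑ k : Fin N,
          ((if k = i then dx t (xs i) (empiricalMeasure xs) else 0)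
              + (1 / N : ℝ) * dmu t (xs i) (empiricalMeasure xs) (xs k))
            • (ContinuousLinearMap.proj (R := ℝ) (φ := fun _ : Fin N => ℝ) k)) xs)
    (hdx : ∀ t ∈ Set.Icc (0 : ℝ) T, ∀ (x x' : ℝ) (μ μ' : Measure ℝ),
      MemP2 μ → MemP2 μ' →
      |dx t x μ - dx t x' μ'| ≤ L * (|x - x'| + wasserstein2 μ μ'))
    (hdmu : ∀ t ∈ Set.Icc (0 : ℝ) T, ∀ (x x' y y' : ℝ) (μ μ' : Measure ℝ),
      MemP2 μ → MemP2 μ' →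
      |dmu t x μ y - dmu t x' μ' y'|
        ≤ L * (|x - x'| + wasserstein2 μ μ' + |y - y'|)) :
    ∀ t ∈ Set.Icc (0 : ℝ) T, ∀ (x xb : Fin N → ℝ) (i : Fin N),
      |g t (x i) (empiricalMeasure x) - g t (xb i) (empiricalMeasure xb)
          - dx t (xb i) (empiricalMeasure xb) * (x i - xb i)
          - (1 / N : ℝ) * ∑ k, dmu t (xb i) (empiricalMeasure xb) (xb k) * (x k - xb k)|
        ≤ 3 * L / 2 * (x i - xb i) ^ 2
          + 5 * L / 2 * ((1 / N : ℝ) * ∑ k, (x k - xb k) ^ 2) := by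
  intro t ht x xb i
  classical
  have hNR : (0 : ℝ) < N := by exact_mod_cast hN
  obtain ⟨Δ, hΔ⟩ : ∃ Δ : Fin N → ℝ, ∀ k, x k - xb k = Δ k := ⟨_, fun _ => rfl⟩
  obtain ⟨M, hM⟩ : ∃ M : ℝ, (1 / N : ℝ) * ∑ k, Δ k ^ 2 = M := ⟨_, rfl⟩
  have hMnn : 0 ≤ M := by
    rw [← hM]
    exact mul_nonneg (by positivity) (Finset.sum_nonneg fun k _ => sq_nonneg _)
  obtain ⟨R, hR⟩ : ∃ R : ℝ, Real.sqrt M = R := ⟨_, rfl⟩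
  have hRnn : 0 ≤ R := hR ▸ Real.sqrt_nonneg _
  have hRsq : R ^ 2 = M := by rw [← hR]; exact Real.sq_sqrt hMnn
  obtain ⟨A, hA⟩ : ∃ A : ℝ, dx t (xb i) (empiricalMeasure xb) * Δ i
      + (1 / N : ℝ) * ∑ k, dmu t (xb i) (empiricalMeasure xb) (xb k) * Δ k = A := ⟨_, rfl⟩
  obtain ⟨K, hK⟩ : ∃ K : ℝ, L * (2 * Δ i ^ 2 + 3 * M) = K := ⟨_, rfl⟩
  -- rewrite the goal
  simp only [hΔ, hM]
  have hgoal : g t (x i) (empiricalMeasure x) - g t (xb i) (empiricalMeasure xb)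
      - dx t (xb i) (empiricalMeasure xb) * Δ i
      - (1 / N : ℝ) * ∑ k, dmu t (xb i) (empiricalMeasure xb) (xb k) * Δ k
      = g t (x i) (empiricalMeasure x) - g t (xb i) (empiricalMeasure xb) - A := by
    rw [← hA]; ring
  rw [hgoal]
  -- the curve
  obtain ⟨c, hcdef⟩ : ∃ c : ℝ → Fin N → ℝ, c = fun s => xb + s • (x - xb) := ⟨_, rfl⟩
  have hck : ∀ s k, c s k = xb k + s * Δ k := by
    intro s k
    rw [hcdef]
    show xb k + s * (x k - xb k) = xb k + s * Δ k
    rw [hΔ k]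
  have hc0 : c 0 = xb := by funext k; rw [hck]; ring
  have hc1 : c 1 = x := by funext k; rw [hck, ← hΔ k]; ring
  have hcder : ∀ s : ℝ, HasDerivAt c (x - xb) s := by
    intro s
    rw [hcdef]
    have : HasDerivAt (fun s : ℝ => s • (x - xb)) ((1 : ℝ) • (x - xb)) s :=
      (hasDerivAt_id s).smul_const (x - xb)
    simpa [one_smul] using this.const_add xb
  -- value of the derivative in direction x - xb
  have hDval : ∀ v : Fin N → ℝ,
      (∑ k : Fin N,
          ((if k = i then dx t (v i) (empiricalMeasure v) else 0)
              + (1 / N : ℝ) * dmu t (v i) (empiricalMeasure v) (v k))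
            • (ContinuousLinearMap.proj (R := ℝ) (φ := fun _ : Fin N => ℝ) k)) (x - xb)
        = dx t (v i) (empiricalMeasure v) * Δ i
          + (1 / N : ℝ) * ∑ k, dmu t (v i) (empiricalMeasure v) (v k) * Δ k := by
    intro v
    rw [ContinuousLinearMap.sum_apply]
    simp only [ContinuousLinearMap.smul_apply, ContinuousLinearMap.proj_apply,
      smul_eq_mul, Pi.sub_apply]
    have hterm : ∀ k : Fin N,
        ((if k = i then dx t (v i) (empiricalMeasure v) else 0)
            + (1 / N : ℝ) * dmu t (v i) (empiricalMeasure v) (v k)) * (x k - xb k)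
        = (if k = i then dx t (v i) (empiricalMeasure v) * Δ i else 0)
            + (1 / N : ℝ) * (dmu t (v i) (empiricalMeasure v) (v k) * Δ k) := by
      intro k
      by_cases h : k = i
      · subst h
        simp only [eq_self_iff_true, if_true, hΔ k]
        ring
      · simp only [if_neg h]; rw [hΔ k]; ring
    rw [Finset.sum_congr rfl fun k _ => hterm k, Finset.sum_add_distrib,
      Finset.sum_ite_eq' Finset.univ i, ← Finset.mul_sum]
    simp
  -- the function f and its derivative
  obtain ⟨f, hfdef⟩ : ∃ f : ℝ → ℝ, f = fun s => g t (c s i) (empiricalMeasure (c s))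
      - g t (xb i) (empiricalMeasure xb) - s * A := ⟨_, rfl⟩
  obtain ⟨E, hEdef⟩ : ∃ E : ℝ → ℝ, ∀ s, dx t (c s i) (empiricalMeasure (c s)) * Δ i
      + (1 / N : ℝ) * ∑ k, dmu t (c s i) (empiricalMeasure (c s)) (c s k) * Δ k = E s :=
    ⟨_, fun _ => rfl⟩
  have hfder : ∀ s : ℝ, HasDerivAt f (E s - A) s := by
    intro s
    rw [hfdef]
    have h1 : HasDerivAt (fun s : ℝ => g t (c s i) (empiricalMeasure (c s))) (E s) s := by
      have := (hderiv t ht i (c s)).comp_hasDerivAt s (hcder s)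
      rwa [hDval (c s), hEdef s] at this
    have h2 : HasDerivAt (fun s : ℝ => s * A) A s := by
      simpa using (hasDerivAt_id s).mul_const A
    exact (h1.sub_const (g t (xb i) (empiricalMeasure xb))).sub h2
  -- bound on the derivative
  have hbound : ∀ s ∈ Set.Ico (0 : ℝ) 1, ‖E s - A‖ ≤ K * s := by
    intro s hs
    obtain ⟨hs0, _⟩ := hs
    have hm1 : MemP2 (empiricalMeasure (c s)) := memP2_empirical hN _
    have hm2 : MemP2 (empiricalMeasure xb) := memP2_empirical hN _
    have hxi : |c s i - xb i| = s * |Δ i| := by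
      rw [hck s i]
      rw [show xb i + s * Δ i - xb i = s * Δ i by ring, abs_mul, abs_of_nonneg hs0]
    have hW : wasserstein2 (empiricalMeasure (c s)) (empiricalMeasure xb) ≤ s * R := by
      have h := w2_empirical_le hN (c s) xb
      have heq : (1 / N : ℝ) * ∑ k, (c s k - xb k) ^ 2 = s ^ 2 * M := by
        have hpt : ∀ k : Fin N, (c s k - xb k) ^ 2 = s ^ 2 * Δ k ^ 2 := fun k => by
          rw [hck s k]; ring
        rw [Finset.sum_congr rfl fun k _ => hpt k, ← Finset.mul_sum, ← hM]
        ring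
      rw [heq, Real.sqrt_mul (sq_nonneg s), Real.sqrt_sq hs0, hR] at h
      exact h
    have hdx' : |dx t (c s i) (empiricalMeasure (c s)) - dx t (xb i) (empiricalMeasure xb)|
        ≤ L * (s * |Δ i| + s * R) := by
      refine (hdx t ht _ _ _ _ hm1 hm2).trans ?_
      apply mul_le_mul_of_nonneg_left _ hL.le
      rw [hxi]
      exact add_le_add_right hW _
    have hdmu' : ∀ k, |dmu t (c s i) (empiricalMeasure (c s)) (c s k)
          - dmu t (xb i) (empiricalMeasure xb) (xb k)|
        ≤ L * (s * |Δ i| + s * R + s * |Δ k|) := by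
      intro k
      refine (hdmu t ht _ _ _ _ _ _ hm1 hm2).trans ?_
      apply mul_le_mul_of_nonneg_left _ hL.le
      rw [hxi, hck s k, show xb k + s * Δ k - xb k = s * Δ k by ring, abs_mul,
        abs_of_nonneg hs0]
      exact add_le_add_left (add_le_add_right hW _) _
    have hsplit : E s - A
        = (dx t (c s i) (empiricalMeasure (c s)) - dx t (xb i) (empiricalMeasure xb)) * Δ i
          + (1 / N : ℝ) * ∑ k, (dmu t (c s i) (empiricalMeasure (c s)) (c s k)
              - dmu t (xb i) (empiricalMeasure xb) (xb k)) * Δ k := by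
      rw [← hEdef s, ← hA]
      simp only [sub_mul, Finset.sum_sub_distrib, mul_sub]
      ring
    rw [Real.norm_eq_abs, hsplit]
    have t1 : |(dx t (c s i) (empiricalMeasure (c s)) - dx t (xb i) (empiricalMeasure xb)) * Δ i|
        ≤ L * (s * |Δ i| + s * R) * |Δ i| := by
      rw [abs_mul]
      exact mul_le_mul_of_nonneg_right hdx' (abs_nonneg _)
    have t2 : |(1 / N : ℝ) * ∑ k, (dmu t (c s i) (empiricalMeasure (c s)) (c s k)
          - dmu t (xb i) (empiricalMeasure xb) (xb k)) * Δ k|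
        ≤ (1 / N : ℝ) * ∑ k, L * (s * |Δ i| + s * R + s * |Δ k|) * |Δ k| := by
      rw [abs_mul, abs_of_nonneg (by positivity : (0:ℝ) ≤ (1 / N : ℝ))]
      apply mul_le_mul_of_nonneg_left _ (by positivity : (0:ℝ) ≤ (1 / N : ℝ))
      refine (Finset.abs_sum_le_sum_abs _ _).trans ?_
      apply Finset.sum_le_sum
      intro k _
      rw [abs_mul]
      exact mul_le_mul_of_nonneg_right (hdmu' k) (abs_nonneg _)
    refine ((abs_add_le _ _).trans (add_le_add t1 t2)).trans ?_
    -- arithmetic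
    have hterm1 : L * (s * |Δ i| + s * R) * |Δ i| ≤ L * s * (3 / 2 * Δ i ^ 2 + M / 2) := by
      have h1 : (|Δ i| + R) * |Δ i| ≤ 3 / 2 * Δ i ^ 2 + M / 2 := by
        nlinarith [sq_nonneg (R - |Δ i|), sq_abs (Δ i), abs_mul_abs_self (Δ i), hRsq]
      calc L * (s * |Δ i| + s * R) * |Δ i| = L * s * ((|Δ i| + R) * |Δ i|) := by ring
        _ ≤ L * s * (3 / 2 * Δ i ^ 2 + M / 2) :=
            mul_le_mul_of_nonneg_left h1 (mul_nonneg hL.le hs0)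
    have hterm2 : (1 / N : ℝ) * ∑ k, L * (s * |Δ i| + s * R + s * |Δ k|) * |Δ k|
        ≤ L * s * (Δ i ^ 2 / 2 + M / 2 + 2 * M) := by
      have hk : ∀ k, L * (s * |Δ i| + s * R + s * |Δ k|) * |Δ k|
          ≤ L * s * ((Δ i ^ 2 + Δ k ^ 2) / 2 + (M + Δ k ^ 2) / 2 + Δ k ^ 2) := by
        intro k
        have h1 : (|Δ i| + R + |Δ k|) * |Δ k|
            ≤ (Δ i ^ 2 + Δ k ^ 2) / 2 + (M + Δ k ^ 2) / 2 + Δ k ^ 2 := by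
          nlinarith [sq_nonneg (|Δ i| - |Δ k|), sq_nonneg (R - |Δ k|), sq_abs (Δ i),
            sq_abs (Δ k), abs_mul_abs_self (Δ k), hRsq]
        calc L * (s * |Δ i| + s * R + s * |Δ k|) * |Δ k|
            = L * s * ((|Δ i| + R + |Δ k|) * |Δ k|) := by ring
          _ ≤ L * s * ((Δ i ^ 2 + Δ k ^ 2) / 2 + (M + Δ k ^ 2) / 2 + Δ k ^ 2) :=
              mul_le_mul_of_nonneg_left h1 (mul_nonneg hL.le hs0)
      have hsum : (1 / N : ℝ) * ∑ k, L * (s * |Δ i| + s * R + s * |Δ k|) * |Δ k|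
          ≤ (1 / N : ℝ) * ∑ k, L * s * ((Δ i ^ 2 + Δ k ^ 2) / 2 + (M + Δ k ^ 2) / 2 + Δ k ^ 2) := by
        exact mul_le_mul_of_nonneg_left (Finset.sum_le_sum fun k _ => hk k)
          (by positivity : (0:ℝ) ≤ (1 / N : ℝ))
      refine hsum.trans (le_of_eq ?_)
      have hS : ∑ k, Δ k ^ 2 = N * M := by
        rw [← hM]; field_simp
      have hsum2 : ∑ k : Fin N, L * s * ((Δ i ^ 2 + Δ k ^ 2) / 2 + (M + Δ k ^ 2) / 2 + Δ k ^ 2)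
          = (N : ℝ) * (L * s * (Δ i ^ 2 / 2 + M / 2)) + L * s * 2 * ((N : ℝ) * M) := by
        rw [Finset.sum_congr rfl (fun k _ => by ring :
          ∀ k ∈ Finset.univ, L * s * ((Δ i ^ 2 + Δ k ^ 2) / 2 + (M + Δ k ^ 2) / 2 + Δ k ^ 2)
            = L * s * (Δ i ^ 2 / 2 + M / 2) + L * s * 2 * Δ k ^ 2)]
        rw [Finset.sum_add_distrib, Finset.sum_const, Finset.card_univ, Fintype.card_fin,
          nsmul_eq_mul, ← Finset.mul_sum, hS]
      rw [hsum2]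
      field_simp
    calc L * (s * |Δ i| + s * R) * |Δ i|
          + (1 / N : ℝ) * ∑ k, L * (s * |Δ i| + s * R + s * |Δ k|) * |Δ k|
        ≤ L * s * (3 / 2 * Δ i ^ 2 + M / 2) + L * s * (Δ i ^ 2 / 2 + M / 2 + 2 * M) :=
          add_le_add hterm1 hterm2
      _ = K * s := by rw [← hK]; ring
  -- fencing theorem
  have hBder : ∀ s : ℝ, HasDerivAt (fun s : ℝ => K / 2 * s ^ 2) (K * s) s := by
    intro s
    have h := (hasDerivAt_pow 2 s).const_mul (K / 2)
    refine h.congr_deriv ?_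
    simp
    ring
  have hcont : ContinuousOn f (Set.Icc 0 1) :=
    fun s _ => (hfder s).continuousAt.continuousWithinAt
  have hf0 : ‖f 0‖ ≤ K / 2 * (0 : ℝ) ^ 2 := by
    rw [hfdef]
    simp [hc0]
  have key := image_norm_le_of_norm_deriv_right_le_deriv_boundary hcont
    (fun s _ => (hfder s).hasDerivWithinAt) hf0 hBder
    (fun s hs => hbound s hs)
  have h1 := key (Set.right_mem_Icc.mpr zero_le_one)
  rw [hfdef] at h1
  simp only [hc1, one_mul, one_pow, mul_one] at h1
  rw [Real.norm_eq_abs] at h1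
  refine h1.trans ?_
  rw [← hK]
  nlinarith [sq_nonneg (Δ i), hMnn, hL.le]
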